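/- Let n ≥ 1 and equip ℝⁿ (i.e., Fin n → ℝ) with the sup norm ‖v‖∞ = max_k |v_k|. Let φ : ℝⁿ → ℝ be continuous, let a ∈ ℝⁿ satisfy φ(a) > 0, and let x̂ ∈ ℝⁿ satisfy φ(x̂) = 0 and ‖x̂ − a‖∞ ≤ ‖z − a‖∞ for every z with φ(z) = 0 (i.e., x̂ is a closest point of the zero level set of φ to a). Suppose φ is Fréchet differentiable at x̂ with gradient ∇φ(x̂) ∈ ℝⁿ, and let J = {j : |x̂_j − a_j| = ‖x̂ − a‖∞}. Then: (a) for every j ∈ J, ∇φ(x̂)_j · (x̂_j − a_j) ≤ 0 (the j-th gradient component and x̂_j − a_j have opposite signs); and (b) for every k ∉ J, ∇φ(x̂)_k = 0. -/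
import Mathlib

open Filter Set Topology

set_option maxHeartbeats 1000000 in
/-- Lemma A.2 (ℓ∞ optimality conditions, case φ(a) > 0). `Fin n → ℝ` carries the sup norm. -/
theorem linf_optimality_pos
    {n : ℕ} (hn : 1 ≤ n)
    (φ : (Fin n → ℝ) → ℝ) (hφc : Continuous φ)
    (a : Fin n → ℝ) (ha : 0 < φ a)
    (xhat : Fin n → ℝ) (hzero : φ xhat = 0)
    (hmin : ∀ z : Fin n → ℝ, φ z = 0 → ‖xhat - a‖ ≤ ‖z - a‖)
    (L : (Fin n → ℝ) →L[ℝ] ℝ) (hφd : HasFDerivAt φ L xhat)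
    (g : Fin n → ℝ) (hg : ∀ v : Fin n → ℝ, L v = ∑ k, g k * v k)
    (J : Set (Fin n)) (hJ : J = {j | |xhat j - a j| = ‖xhat - a‖}) :
    (∀ j ∈ J, g j * (xhat j - a j) ≤ 0) ∧ (∀ k ∉ J, g k = 0) := by
  classical
  set r : ℝ := ‖xhat - a‖ with hr_def
  have hne : xhat ≠ a := by
    intro h; rw [h] at hzero; linarith
  have hr : 0 < r := norm_pos_iff.mpr (sub_ne_zero.mpr hne)
  -- points strictly inside the ball have φ > 0
  have hball : ∀ z : Fin n → ℝ, ‖z - a‖ < r → 0 < φ z := by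
    intro z hz
    by_contra hle
    push_neg at hle
    have hzne : φ z ≠ 0 := by
      intro h0
      have := hmin z h0
      linarith
    have hzneg : φ z < 0 := lt_of_le_of_ne hle hzne
    set ψ : ℝ → ℝ := fun s => φ (a + s • (z - a)) with hψ
    have hψc : ContinuousOn ψ (Icc 0 1) :=
      (hφc.comp (by continuity)).continuousOn
    have h0mem : (0:ℝ) ∈ Icc (ψ 1) (ψ 0) := by
      constructor
      · simp only [ψ, one_smul]
        simp only [add_sub_cancel]
        linarith
      · simp only [ψ, zero_smul, add_zero]
        linarith
    obtain ⟨s, hs, hψs⟩ := intermediate_value_Icc' (by norm_num : (0:ℝ) ≤ 1) hψc h0mem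
    have hφz' : φ (a + s • (z - a)) = 0 := hψs
    have := hmin _ hφz'
    have hnorm : ‖(a + s • (z - a)) - a‖ = |s| * ‖z - a‖ := by
      simp [norm_smul, Real.norm_eq_abs]
    rw [hnorm] at this
    have habs : |s| ≤ 1 := abs_le.mpr ⟨by linarith [hs.1], hs.2⟩
    nlinarith [norm_nonneg (z - a), abs_nonneg s]
  -- key lemma: admissible strict directions
  have hkey : ∀ d : Fin n → ℝ, (∀ j ∈ J, d j * (xhat j - a j) < 0) → 0 ≤ L d := by
    intro d hd
    -- per-coordinate eventual estimate
    have hco : ∀ i : Fin n, ∀ᶠ t in 𝓝[>] (0:ℝ), |(xhat i - a i) + t * d i| < r := by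
      intro i
      by_cases hi : i ∈ J
      · have hwi : |xhat i - a i| = r := by rw [hJ] at hi; exact hi
        have hdi : d i * (xhat i - a i) < 0 := hd i hi
        set t₀ : ℝ := -(d i * (xhat i - a i)) / (d i ^ 2) with ht₀
        have hdne : d i ≠ 0 := by
          intro h; rw [h] at hdi; simp at hdi
        have ht₀pos : 0 < t₀ := by
          apply div_pos (by linarith) (by positivity)
        have hmem : Ioo (0:ℝ) t₀ ∈ 𝓝[>] (0:ℝ) :=
          Ioo_mem_nhdsGT_of_mem ⟨le_refl 0, ht₀pos⟩
        filter_upwards [hmem] with t ht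
        have ht1 : 0 < t := ht.1
        have ht2 : t < t₀ := ht.2
        have hsq : ((xhat i - a i) + t * d i) ^ 2 < r ^ 2 := by
          have hrw : r ^ 2 = (xhat i - a i) ^ 2 := by
            rw [← hwi, sq_abs]
          rw [hrw]
          have h2 : t * d i ^ 2 < -(d i * (xhat i - a i)) :=
            (lt_div_iff₀ (by positivity : (0:ℝ) < d i ^ 2)).mp ht2
          nlinarith
        have := abs_nonneg ((xhat i - a i) + t * d i)
        nlinarith [sq_abs ((xhat i - a i) + t * d i)]
      · have hwle : |xhat i - a i| ≤ r := by
          have := norm_le_pi_norm (xhat - a) i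
          simpa [Real.norm_eq_abs] using this
        have hwne : |xhat i - a i| ≠ r := by rw [hJ] at hi; exact hi
        have hwlt : |xhat i - a i| < r := lt_of_le_of_ne hwle hwne
        have htend : Tendsto (fun t : ℝ => |(xhat i - a i) + t * d i|) (𝓝 0)
            (𝓝 |xhat i - a i|) := by
          have hc : Continuous (fun t : ℝ => |(xhat i - a i) + t * d i|) :=
            (continuous_const.add (continuous_id.mul continuous_const)).abs
          simpa using hc.tendsto 0
        exact (htend.eventually_lt_const hwlt).filter_mono nhdsWithin_le_nhds
    have hev : ∀ᶠ t in 𝓝[>] (0:ℝ), ‖(xhat + t • d) - a‖ < r := by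
      filter_upwards [Filter.eventually_all.mpr hco] with t ht
      rw [pi_norm_lt_iff hr]
      intro i
      have := ht i
      simp only [Pi.sub_apply, Pi.add_apply, Pi.smul_apply, smul_eq_mul, Real.norm_eq_abs]
      convert this using 2
      ring
    have hpos : ∀ᶠ t in 𝓝[>] (0:ℝ), 0 < φ (xhat + t • d) :=
      hev.mono fun t ht => hball _ ht
    -- derivative of t ↦ φ(x̂ + t d) at 0 is L d
    have hline : HasDerivAt (fun t : ℝ => xhat + t • d) d 0 := by
      simpa using ((hasDerivAt_id (0:ℝ)).smul_const d).const_add xhat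
    have hφd' : HasFDerivAt φ L (xhat + (0:ℝ) • d) := by simpa using hφd
    have hderiv : HasDerivAt (fun t : ℝ => φ (xhat + t • d)) (L d) 0 :=
      hφd'.comp_hasDerivAt 0 hline
    have hslope : Tendsto (slope (fun t : ℝ => φ (xhat + t • d)) 0)
        (𝓝[Ioi 0 \ {0}] 0) (𝓝 (L d)) := by
      have := (hderiv.hasDerivWithinAt (s := Ioi (0:ℝ)))
      rwa [hasDerivWithinAt_iff_tendsto_slope] at this
    have hset : Ioi (0:ℝ) \ {0} = Ioi 0 := by
      apply diff_singleton_eq_self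
      simp
    rw [hset] at hslope
    refine ge_of_tendsto hslope ?_
    filter_upwards [hpos, self_mem_nhdsWithin] with t hφt ht
    have ht0 : 0 < t := ht
    have : slope (fun t : ℝ => φ (xhat + t • d)) 0 t = φ (xhat + t • d) / t := by
      simp [slope_def_field, hzero]
    rw [this]
    positivity
  -- relaxed key lemma: weak inequalities
  have hkey2 : ∀ d : Fin n → ℝ, (∀ j ∈ J, d j * (xhat j - a j) ≤ 0) → 0 ≤ L d := by
    intro d hd
    set wJ : Fin n → ℝ := fun i => if i ∈ J then xhat i - a i else 0 with hwJ
    have hstep : ∀ ε : ℝ, 0 < ε → ε * L wJ ≤ L d := by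
      intro ε hε
      have hadm : ∀ j ∈ J, (d - ε • wJ) j * (xhat j - a j) < 0 := by
        intro j hj
        have hwj : |xhat j - a j| = r := by rw [hJ] at hj; exact hj
        have hwne : xhat j - a j ≠ 0 := by
          intro h; rw [h] at hwj; simp at hwj; linarith
        have hdj := hd j hj
        simp only [Pi.sub_apply, Pi.smul_apply, smul_eq_mul, hwJ, if_pos hj]
        have hsq : 0 < (xhat j - a j) * (xhat j - a j) := mul_self_pos.mpr hwne
        nlinarith
      have := hkey _ hadm
      have hlin : L (d - ε • wJ) = L d - ε * L wJ := by
        rw [map_sub, map_smul]; simp [smul_eq_mul]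
      rw [hlin] at this
      linarith
    by_contra hneg
    push_neg at hneg
    rcases le_or_gt 0 (L wJ) with h | h
    · have := hstep 1 one_pos
      nlinarith
    · have hεpos : 0 < L d / (2 * L wJ) := div_pos_of_neg_of_neg hneg (by linarith)
      have := hstep _ hεpos
      have heq : L d / (2 * L wJ) * L wJ = L d / 2 := by
        rw [div_mul_eq_mul_div, mul_comm 2 (L wJ), ← div_div, mul_div_assoc,
          div_self (ne_of_lt h), mul_one]
      rw [heq] at this
      linarith
  constructor
  · intro j hj
    have hadm : ∀ i ∈ J, (Pi.single j (-(xhat j - a j)) : Fin n → ℝ) i * (xhat i - a i) ≤ 0 := by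
      intro i hi
      rcases eq_or_ne i j with rfl | hne
      · simp only [Pi.single_eq_same]
        nlinarith [sq_nonneg (xhat i - a i)]
      · simp [Pi.single_eq_of_ne hne]
    have h := hkey2 _ hadm
    rw [hg] at h
    have hsum : ∑ k, g k * (Pi.single j (-(xhat j - a j)) : Fin n → ℝ) k
        = g j * (-(xhat j - a j)) := by
      rw [Finset.sum_eq_single j]
      · simp
      · intro b _ hb
        simp [Pi.single_eq_of_ne hb]
      · simp
    rw [hsum] at h
    linarith
  · intro k hk
    have hadm : ∀ i ∈ J, (Pi.single k (-(g k)) : Fin n → ℝ) i * (xhat i - a i) ≤ 0 := by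
      intro i hi
      have hne : i ≠ k := fun h => hk (h ▸ hi)
      simp [Pi.single_eq_of_ne hne]
    have h := hkey2 _ hadm
    rw [hg] at h
    have hsum : ∑ i, g i * (Pi.single k (-(g k)) : Fin n → ℝ) i = g k * (-(g k)) := by
      rw [Finset.sum_eq_single k]
      · simp
      · intro b _ hb
        simp [Pi.single_eq_of_ne hb]
      · simp
    rw [hsum] at h
    have : g k * g k = 0 := le_antisymm (by linarith) (mul_self_nonneg _)
    exact mul_self_eq_zero.mp this
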